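/- Incremental remote current from prefault local measurements: suppose the hypotheses of the operating-point independence result hold (fault-time and prefault network equations, v_S = v_S', i_C = i_C', and Y_LHS invertible), so that x = (ṽ_F, ṽ_J, ṽ_C, ĩ_S) = Y_LHS⁻¹ ⬝ Y_RHS ⬝ v_F'. Suppose further that the prefault fault-bus voltage satisfies the prefault line KVL v_F' = v_L' − (m_T·z) • i_L', where v_L', i_L' : nF → ℂ are the prefault local voltage and current, z ∈ ℂ with z ≠ 0, and m_T ∈ ℝ with m_T ≠ 1. Let D_R, D_F : Matrix (Fin 3) ι ℂ be extraction matrices for the remote-bus and fault-bus voltage components. Then the incremental remote current σ := (1/((1−m_T)·z)) • (D_R ⬝ x − D_F ⬝ x) satisfies σ = Ω ⬝ (v_L', i_L'), where Ω : Matrix (Fin 3) (nF ⊕ nF) ℂ is the matrix (1/((1−m_T)·z)) • (D_R − D_F) ⬝ Y_LHS⁻¹ ⬝ Y_RHS ⬝ [I, −(m_T·z)•I]. In particular, σ is a linear function of the prefault local measurements (v_L(t−δ), i_L(t−δ)) whose coefficients depend only on m_T, m_F, z, and the network matrices. -/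

import Mathlib

open Matrix

/-- Assemble a vector on `ι = nF ⊕ nJ ⊕ nC ⊕ nS` from its four blocks. -/
def blockVec {nF nJ nC nS : Type*} (xF : nF → ℂ) (xJ : nJ → ℂ) (xC : nC → ℂ)
    (xS : nS → ℂ) : nF ⊕ nJ ⊕ nC ⊕ nS → ℂ :=
  Sum.elim xF (Sum.elim xJ (Sum.elim xC xS))

/-- The correction matrix `B`: `Y_F` in the (F,F) block, `Y_J` in the (J,J)
block, `−Y_C` in the (C,C) block, the S block-column equal to `−I_S − Y_{·,S}`
(where `I_S` has the identity in the S rows and zeros elsewhere and `Y_{·,S}`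
is the S block-column of `Y`), and zeros in all other blocks.  Then
`Y_LHS = Y + B`. -/
def Bmat {nF nJ nC nS : Type*}
    [DecidableEq nF] [DecidableEq nJ] [DecidableEq nC] [DecidableEq nS]
    (Y : Matrix (nF ⊕ nJ ⊕ nC ⊕ nS) (nF ⊕ nJ ⊕ nC ⊕ nS) ℂ)
    (YF : Matrix nF nF ℂ) (YJ : Matrix nJ nJ ℂ) (YC : Matrix nC nC ℂ) :
    Matrix (nF ⊕ nJ ⊕ nC ⊕ nS) (nF ⊕ nJ ⊕ nC ⊕ nS) ℂ :=
  Matrix.of fun r c =>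
    match r, c with
    | r', Sum.inr (Sum.inr (Sum.inr s)) =>
        -(if r' = Sum.inr (Sum.inr (Sum.inr s)) then 1 else 0)
          - Y r' (Sum.inr (Sum.inr (Sum.inr s)))
    | Sum.inl i, Sum.inl j => YF i j
    | Sum.inr (Sum.inl i), Sum.inr (Sum.inl j) => YJ i j
    | Sum.inr (Sum.inr (Sum.inl i)), Sum.inr (Sum.inr (Sum.inl j)) => -YC i j
    | _, _ => 0

/-- The right-hand-side matrix `Y_RHS`: `−Y_F` in the F rows, zeros elsewhere. -/
def YRHSmat {nF nJ nC nS : Type*} (YF : Matrix nF nF ℂ) :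
    Matrix (nF ⊕ nJ ⊕ nC ⊕ nS) nF ℂ :=
  Matrix.of fun r j =>
    match r with
    | Sum.inl i => -YF i j
    | _ => 0



section Aux

variable {nJ nC nS : Type*} [Fintype nJ] [Fintype nC] [Fintype nS]
  [DecidableEq nJ] [DecidableEq nC] [DecidableEq nS]

lemma blockVec_add {nF : Type*} (a a' : nF → ℂ) (b b' : nJ → ℂ) (c c' : nC → ℂ)
    (d d' : nS → ℂ) :
    blockVec a b c d + blockVec a' b' c' d' =
      blockVec (a + a') (b + b') (c + c') (d + d') := by
  funext r; rcases r with i | j | k | s <;> simp [blockVec]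

lemma blockVec_sub {nF : Type*} (a a' : nF → ℂ) (b b' : nJ → ℂ) (c c' : nC → ℂ)
    (d d' : nS → ℂ) :
    blockVec a b c d - blockVec a' b' c' d' =
      blockVec (a - a') (b - b') (c - c') (d - d') := by
  funext r; rcases r with i | j | k | s <;> simp [blockVec]

lemma Bmat_mulVec {nF : Type*} [Fintype nF] [DecidableEq nF]
    (Y : Matrix (nF ⊕ nJ ⊕ nC ⊕ nS) (nF ⊕ nJ ⊕ nC ⊕ nS) ℂ)
    (YF : Matrix nF nF ℂ) (YJ : Matrix nJ nJ ℂ) (YC : Matrix nC nC ℂ)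
    (a : nF → ℂ) (b : nJ → ℂ) (c : nC → ℂ) (d : nS → ℂ) :
    Bmat Y YF YJ YC *ᵥ blockVec a b c d =
      blockVec (YF *ᵥ a) (YJ *ᵥ b) (-(YC *ᵥ c)) 0 - blockVec 0 0 0 d
        - Y *ᵥ blockVec 0 0 0 d := by
  funext r
  rcases r with i | j | k | s <;>
    simp [Bmat, blockVec, Matrix.mulVec, dotProduct, Fintype.sum_sum_type,
      sub_mul, neg_mul, Finset.sum_add_distrib, Finset.sum_neg_distrib,
      ite_mul, Finset.sum_ite_eq', add_comm, Matrix.neg_apply] <;> ring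

lemma Y_mulVec_S {nF : Type*} [Fintype nF]
    (Y : Matrix (nF ⊕ nJ ⊕ nC ⊕ nS) (nF ⊕ nJ ⊕ nC ⊕ nS) ℂ) (d : nS → ℂ) (r) :
    (Y *ᵥ blockVec (0 : nF → ℂ) 0 0 d) r =
      ∑ s, Y r (Sum.inr (Sum.inr (Sum.inr s))) * d s := by
  simp [blockVec, Matrix.mulVec, dotProduct, Fintype.sum_sum_type]

lemma YRHSmat_mulVec {nF : Type*} [Fintype nF] (YF : Matrix nF nF ℂ)
    (v : nF → ℂ) :
    (YRHSmat YF : Matrix (nF ⊕ nJ ⊕ nC ⊕ nS) nF ℂ) *ᵥ v =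
      blockVec (-(YF *ᵥ v)) 0 0 0 := by
  funext r
  rcases r with i | j | k | s <;>
    simp [YRHSmat, blockVec, Matrix.mulVec, dotProduct, neg_mul]

end Aux

/-- **Incremental remote current from prefault local measurements.**
Under the hypotheses of the operating-point independence result, if moreover
the prefault line KVL `v_F' = v_L' − (m_T·z) • i_L'` holds with `z ≠ 0` and
`m_T ≠ 1`, then the incremental remote current
`σ = (1/((1−m_T)·z)) • (D_R ⬝ x − D_F ⬝ x)` is the linear function
`σ = Ω ⬝ (v_L', i_L')` of the prefault local measurements, where
`Ω = (1/((1−m_T)·z)) • (D_R − D_F) ⬝ Y_LHS⁻¹ ⬝ Y_RHS ⬝ [I, −(m_T·z)•I]`. -/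


theorem incremental_remote_current
    {nJ nC nS : Type*} [Fintype nJ] [Fintype nC] [Fintype nS]
    [DecidableEq nJ] [DecidableEq nC] [DecidableEq nS]
    (Y : Matrix (Fin 3 ⊕ nJ ⊕ nC ⊕ nS) (Fin 3 ⊕ nJ ⊕ nC ⊕ nS) ℂ)
    (YF : Matrix (Fin 3) (Fin 3) ℂ) (YJ : Matrix nJ nJ ℂ) (YC : Matrix nC nC ℂ)
    (vF vF' : Fin 3 → ℂ) (vJ vJ' : nJ → ℂ) (vC vC' : nC → ℂ) (vS vS' : nS → ℂ)
    (iC iC' : nC → ℂ) (iS iS' : nS → ℂ)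
    (vL' iL' : Fin 3 → ℂ) (z : ℂ) (m_T : ℝ)
    (D_R D_F : Matrix (Fin 3) (Fin 3 ⊕ nJ ⊕ nC ⊕ nS) ℂ)
    (x : Fin 3 ⊕ nJ ⊕ nC ⊕ nS → ℂ) (σ : Fin 3 → ℂ)
    (hfault : Y *ᵥ blockVec vF vJ vC vS =
      blockVec (-(YF *ᵥ vF)) (-(YJ *ᵥ vJ)) (iC + YC *ᵥ vC) iS)
    (hpre : Y *ᵥ blockVec vF' vJ' vC' vS' =
      blockVec 0 (-(YJ *ᵥ vJ')) (iC' + YC *ᵥ vC') iS')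
    (hvS : vS = vS') (hiC : iC = iC')
    (hinv : IsUnit (Y + Bmat Y YF YJ YC))
    (hx : x = blockVec (vF - vF') (vJ - vJ') (vC - vC') (iS - iS'))
    (hz : z ≠ 0) (hmT : m_T ≠ 1)
    (hlineKVL : vF' = vL' - ((m_T : ℂ) * z) • iL')
    (hσ : σ = (1 / ((1 - (m_T : ℂ)) * z)) • (D_R *ᵥ x - D_F *ᵥ x)) :
    σ = ((1 / ((1 - (m_T : ℂ)) * z)) •
        (((D_R - D_F) * (Y + Bmat Y YF YJ YC)⁻¹ * YRHSmat YF :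
            Matrix (Fin 3) (Fin 3) ℂ) *
          (Matrix.fromCols (1 : Matrix (Fin 3) (Fin 3) ℂ)
            (-((m_T : ℂ) * z) • (1 : Matrix (Fin 3) (Fin 3) ℂ)) :
              Matrix (Fin 3) (Fin 3 ⊕ Fin 3) ℂ))) *ᵥ
      Sum.elim vL' iL' := by

  -- abbreviations
  set A := Y + Bmat Y YF YJ YC with hA
  have hvdiff : blockVec vF vJ vC vS - blockVec vF' vJ' vC' vS' =
      blockVec (vF - vF') (vJ - vJ') (vC - vC') 0 := by
    rw [blockVec_sub, hvS, sub_self]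
  have hxsplit : x = blockVec (vF - vF') (vJ - vJ') (vC - vC') 0
      + blockVec 0 0 0 (iS - iS') := by
    rw [hx, blockVec_add]; simp
  have hYdiff : Y *ᵥ blockVec (vF - vF') (vJ - vJ') (vC - vC') 0 =
      blockVec (-(YF *ᵥ vF)) (-(YJ *ᵥ (vJ - vJ'))) (YC *ᵥ (vC - vC'))
        (iS - iS') := by
    rw [← hvdiff, Matrix.mulVec_sub, hfault, hpre, blockVec_sub, hiC]
    funext r
    rcases r with i | j | k | s <;>
      simp [blockVec, Matrix.mulVec_sub] <;> ring
  have key : A *ᵥ x = YRHSmat YF *ᵥ vF' := by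
    rw [hA, Matrix.add_mulVec, hxsplit, Matrix.mulVec_add, hYdiff,
      Matrix.mulVec_add, Bmat_mulVec, Bmat_mulVec, YRHSmat_mulVec]
    funext r
    rcases r with i | j | k | s <;>
      simp only [blockVec, Sum.elim_inl, Sum.elim_inr, Pi.add_apply,
        Pi.sub_apply, Pi.neg_apply, Pi.zero_apply, Matrix.mulVec_sub,
        Sum.elim_zero_zero, Matrix.mulVec_zero] <;> ring
  have hAinv : A⁻¹ * A = 1 :=
    Matrix.nonsing_inv_mul A ((Matrix.isUnit_iff_isUnit_det A).mp hinv)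
  have hxval : x = A⁻¹ *ᵥ (YRHSmat YF *ᵥ vF') := by
    rw [← key, Matrix.mulVec_mulVec, hAinv, Matrix.one_mulVec]
  have hcol : (Matrix.fromCols (1 : Matrix (Fin 3) (Fin 3) ℂ)
      (-((m_T : ℂ) * z) • (1 : Matrix (Fin 3) (Fin 3) ℂ))) *ᵥ
      Sum.elim vL' iL' = vF' := by
    rw [Matrix.fromCols_mulVec_sumElim, hlineKVL]
    simp [Matrix.neg_mulVec, Matrix.smul_mulVec, Matrix.one_mulVec, sub_eq_add_neg]
  rw [hσ, Matrix.smul_mulVec]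
  congr 1
  rw [← Matrix.mulVec_mulVec, hcol]
  rw [hxval, ← Matrix.sub_mulVec, Matrix.mulVec_mulVec, Matrix.mulVec_mulVec]
  rfl
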